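/- (Coarse reconstruction of averaged increments) Let E be a Banach space and W : [0,∞) → E be Bochner integrable on compact intervals. Let τ_f > 0, r ∈ ℕ with r ≥ 1, and τ_c := r τ_f. For a step size τ > 0 and m ≥ 1 define ⟨W⟩_m^τ := (1/τ)∫_{(m−1)τ}^{mτ} W(s) ds, ⟨W⟩_0^τ := 0, and Δ_m^τ 𝕎 := ⟨W⟩_m^τ − ⟨W⟩_{m−1}^τ. Then Δ_1^{τ_c} 𝕎 = Σ_{l=1}^{r} (1 − (l−1)/r) Δ_l^{τ_f} 𝕎, and for every j ≥ 2, Δ_j^{τ_c} 𝕎 = Σ_{l=0}^{r−1} ((l+1)/r) Δ_{rj−l}^{τ_f} 𝕎 + Σ_{l=0}^{r−2} (1 − (l+1)/r) Δ_{r(j−1)−l}^{τ_f} 𝕎. -/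

import Mathlib

open MeasureTheory

/-- The mean value `⟨W⟩_m^τ = (1/τ)∫_{(m-1)τ}^{mτ} W(s) ds` for `m ≥ 1`, and `⟨W⟩_0^τ = 0`. -/
noncomputable def avgW (E : Type*) [NormedAddCommGroup E] [NormedSpace ℝ E]
    (W : ℝ → E) (τ : ℝ) (m : ℕ) : E :=
  if m = 0 then 0 else (1 / τ) • ∫ s in Set.Icc (((m : ℝ) - 1) * τ) ((m : ℝ) * τ), W s

/-- The averaged increment `Δ_m^τ 𝕎 = ⟨W⟩_m^τ - ⟨W⟩_{m-1}^τ`. -/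
noncomputable def avgIncr (E : Type*) [NormedAddCommGroup E] [NormedSpace ℝ E]
    (W : ℝ → E) (τ : ℝ) (m : ℕ) : E :=
  avgW E W τ m - avgW E W τ (m - 1)

/-- **Coarse reconstruction of averaged increments.** For `τ_c = r τ_f`:
`Δ_1^{τ_c}𝕎 = Σ_{l=1}^r (1 - (l-1)/r) Δ_l^{τ_f}𝕎`, and for `j ≥ 2`,
`Δ_j^{τ_c}𝕎 = Σ_{l=0}^{r-1} ((l+1)/r) Δ_{rj-l}^{τ_f}𝕎
  + Σ_{l=0}^{r-2} (1 - (l+1)/r) Δ_{r(j-1)-l}^{τ_f}𝕎`. -/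
private lemma abel_sum {E : Type*} [AddCommGroup E] [Module ℝ E]
    (a : ℕ → E) (c : ℕ → ℝ) (n : ℕ) :
    ∑ l ∈ Finset.range n, c l • (a (l+1) - a l)
      = c (n-1) • a n - c 0 • a 0 - ∑ l ∈ Finset.range (n-1), (c (l+1) - c l) • a (l+1) := by
  induction n with
  | zero => simp
  | succ n ih =>
    rw [Finset.sum_range_succ, ih]
    cases n with
    | zero => simp [smul_sub]
    | succ m =>
      simp only [Nat.add_sub_cancel, Nat.succ_sub_one]
      rw [Finset.sum_range_succ]
      module

theorem coarse_reconstruction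
    {E : Type*} [NormedAddCommGroup E] [NormedSpace ℝ E] [CompleteSpace E]
    (W : ℝ → E) (hW : ∀ a b : ℝ, IntegrableOn W (Set.Icc a b))
    (τf : ℝ) (hτf : 0 < τf) (r : ℕ) (hr : 1 ≤ r) (τc : ℝ) (hτc : τc = (r : ℝ) * τf) :
    (avgIncr E W τc 1
        = ∑ l ∈ Finset.Icc 1 r, (1 - ((l : ℝ) - 1) / r) • avgIncr E W τf l) ∧
    ∀ j : ℕ, 2 ≤ j →
      avgIncr E W τc j
        = (∑ l ∈ Finset.range r, (((l : ℝ) + 1) / r) • avgIncr E W τf (r * j - l))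
          + ∑ l ∈ Finset.range (r - 1),
              (1 - ((l : ℝ) + 1) / r) • avgIncr E W τf (r * (j - 1) - l) := by
  have hInt : ∀ x y : ℝ, IntervalIntegrable W volume x y := fun x y =>
    (hW (min x y) (max x y)).intervalIntegrable
  set a : ℕ → E := fun m => avgW E W τf m with ha
  have ha0 : a 0 = 0 := by simp [ha, avgW]
  have hG : ∀ m : ℕ, a (m+1) = (1/τf) • ∫ s in ((m:ℝ)*τf)..(((m:ℝ)+1)*τf), W s := by
    intro m
    have hle : (m:ℝ)*τf ≤ ((m:ℝ)+1)*τf := by nlinarith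
    simp only [ha, avgW, if_neg (Nat.succ_ne_zero m)]
    rw [show (((m+1:ℕ):ℝ) - 1) = (m:ℝ) by push_cast; ring,
      show ((m+1:ℕ):ℝ) = (m:ℝ)+1 by push_cast; ring,
      integral_Icc_eq_integral_Ioc, ← intervalIntegral.integral_of_le hle]
  have hSum : ∀ k n : ℕ, ∑ l ∈ Finset.range n, a (k+l+1)
      = (1/τf) • ∫ s in ((k:ℝ)*τf)..(((k+n:ℕ):ℝ)*τf), W s := by
    intro k n
    induction n with
    | zero => simp
    | succ n ih =>
      rw [Finset.sum_range_succ, ih, hG (k+n), ← smul_add,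
        intervalIntegral.integral_add_adjacent_intervals (hInt _ _) (hInt _ _)]
      congr 2
      push_cast; ring
  have hA : ∀ j : ℕ, 1 ≤ j →
      avgW E W τc j = (r:ℝ)⁻¹ • ∑ l ∈ Finset.range r, a (r*(j-1)+l+1) := by
    intro j hj
    obtain ⟨i, rfl⟩ : ∃ i, j = i+1 := ⟨j-1, by omega⟩
    rw [hSum (r*((i+1)-1)) r]
    simp only [avgW, if_neg (Nat.succ_ne_zero i), Nat.add_sub_cancel]
    rw [smul_smul,
      show (((i+1:ℕ):ℝ) - 1)*τc = ((r*i:ℕ):ℝ)*τf by push_cast [hτc]; ring,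
      show ((i+1:ℕ):ℝ)*τc = ((r*i+r:ℕ):ℝ)*τf by push_cast [hτc]; ring,
      integral_Icc_eq_integral_Ioc,
      ← intervalIntegral.integral_of_le (by
        have : (0:ℝ) < (r:ℝ) := by exact_mod_cast hr
        push_cast; nlinarith)]
    congr 1
    have hr0 : (r:ℝ) ≠ 0 := Nat.cast_ne_zero.mpr (by omega)
    rw [hτc]; field_simp
  refine ⟨?_, ?_⟩
  · obtain ⟨n, rfl⟩ : ∃ n, r = n+1 := ⟨r-1, by omega⟩
    have hr0 : ((n:ℝ)+1) ≠ 0 := by positivity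
    rw [avgIncr, show (1:ℕ) - 1 = 0 from rfl, show avgW E W τc 0 = 0 by simp [avgW],
      sub_zero, hA 1 le_rfl]
    rw [← Finset.Ico_add_one_right_eq_Icc, Finset.sum_Ico_eq_sum_range]
    simp only [Nat.succ_sub_one, Nat.add_sub_cancel]
    have hterm : ∀ i ∈ Finset.range (n+1),
        (1 - (((1+i:ℕ):ℝ) - 1) / ((n+1:ℕ):ℝ)) • avgIncr E W τf (1+i)
          = (fun l => 1 - (l:ℝ)/((n:ℝ)+1)) i • (a (i+1) - a i) := by
      intro i hi
      have h2 : (1+i) = i+1 := by omega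
      simp only [avgIncr, h2, Nat.add_sub_cancel, ← ha]
      congr 1
      push_cast; ring
    rw [Finset.sum_congr rfl hterm, abel_sum a _ (n+1)]
    simp only [Nat.add_sub_cancel, ha0, smul_zero, sub_zero, Nat.cast_zero]
    have hc : ∀ i ∈ Finset.range n,
        ((1 - ((i:ℝ)+1)/((n:ℝ)+1)) - (1 - (i:ℝ)/((n:ℝ)+1))) • a (i+1)
          = -(((n:ℝ)+1)⁻¹ • a (i+1)) := by
      intro i hi
      rw [← neg_smul]
      congr 1
      field_simp; ring
    simp only [Nat.cast_add, Nat.cast_one] at hc ⊢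
    rw [Finset.sum_congr rfl hc, Finset.sum_neg_distrib, ← Finset.smul_sum]
    simp only [Nat.mul_zero, Nat.sub_self, Nat.zero_add, Finset.sum_range_succ]
    rw [show (1 - (n:ℝ)/((n:ℝ)+1)) = ((n:ℝ)+1)⁻¹ by field_simp; ring]
    module
  · intro j hj
    obtain ⟨i, rfl⟩ : ∃ i, j = i+2 := ⟨j-2, by omega⟩
    obtain ⟨n, rfl⟩ : ∃ n, r = n+1 := ⟨r-1, by omega⟩
    rw [avgIncr, show i+2-1 = i+1 from rfl, hA (i+2) (by omega), hA (i+1) (by omega)]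
    cases n with
    | zero =>
      simp only [Nat.zero_add, Finset.range_one, Finset.sum_singleton, Nat.one_mul,
        Finset.sum_range_one, Nat.cast_one, Nat.cast_zero, Nat.zero_sub, Nat.sub_zero,
        Nat.sub_self, Finset.range_zero, Finset.sum_empty, add_zero, inv_one, one_smul,
        Nat.cast_ofNat, Nat.add_sub_cancel]
      norm_num
      simp [avgIncr, ha]
    | succ m =>
      rw [show i+2-1 = i+1 by omega]
      simp only [Nat.add_sub_cancel]
      have hK : ((m+1+1:ℕ):ℝ) = (m:ℝ)+2 := by push_cast; ring
      set K : ℝ := ((m:ℝ)+2)⁻¹ with hKdef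
      set b : ℕ → E := fun k => a ((m+1+1)*(i+1)+k) with hb
      set b' : ℕ → E := fun k => a ((m+1+1)*i+k+1) with hb'
      set c : ℕ → ℝ := fun l => (((m:ℝ)+2) - l)/((m:ℝ)+2) with hc
      set c' : ℕ → ℝ := fun l => ((l:ℝ)+1)/((m:ℝ)+2) with hc'
      rw [← Finset.sum_range_reflect
        (fun l : ℕ => (((l:ℝ)+1)/((m+1+1:ℕ):ℝ)) • avgIncr E W τf ((m+1+1)*(i+2)-l)) (m+1+1),
        ← Finset.sum_range_reflect
        (fun l : ℕ => (1 - ((l:ℝ)+1)/((m+1+1:ℕ):ℝ)) • avgIncr E W τf ((m+1+1)*(i+1)-l)) (m+1)]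
      have hterm1 : ∀ l ∈ Finset.range (m+1+1),
          (fun l0 : ℕ => (((l0:ℝ)+1)/((m+1+1:ℕ):ℝ)) • avgIncr E W τf ((m+1+1)*(i+2)-l0)) (m+1+1-1-l)
            = c l • (b (l+1) - b l) := by
        intro l hl
        have hl' : l < m+2 := Finset.mem_range.mp hl
        simp only [avgIncr, hb, hc, ← ha]
        rw [show (m+1+1)*(i+2) - (m+1+1-1-l) = (m+1+1)*(i+1)+(l+1) by
              have h1 : (m+1+1)*(i+2) = (m+1+1)*(i+1)+(m+2) := by ring
              omega,
            show ((m+1+1)*(i+1)+(l+1)) - 1 = (m+1+1)*(i+1)+l by omega]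
        congr 1
        rw [show m+1+1-1-l = m+1-l by omega, Nat.cast_sub (by omega : l ≤ m+1), hK]
        push_cast; ring
      have hterm2 : ∀ l ∈ Finset.range (m+1),
          (fun l0 : ℕ => (1 - ((l0:ℝ)+1)/((m+1+1:ℕ):ℝ)) • avgIncr E W τf ((m+1+1)*(i+1)-l0)) (m+1-1-l)
            = c' l • (b' (l+1) - b' l) := by
        intro l hl
        have hl' : l < m+1 := Finset.mem_range.mp hl
        simp only [avgIncr, hb', hc', ← ha]
        rw [show (m+1+1)*(i+1) - (m+1-1-l) = (m+1+1)*i+(l+1)+1 by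
              have h1 : (m+1+1)*(i+1) = (m+1+1)*i+(m+2) := by ring
              omega,
            show ((m+1+1)*i+(l+1)+1) - 1 = (m+1+1)*i+l+1 by omega]
        congr 1
        rw [show m+1-1-l = m-l by omega, Nat.cast_sub (by omega : l ≤ m), hK]
        have h2 : ((m:ℝ)+2) ≠ 0 := by positivity
        push_cast
        field_simp
        ring
      rw [Finset.sum_congr rfl hterm1, Finset.sum_congr rfl hterm2,
        abel_sum b c (m+1+1), abel_sum b' c' (m+1)]
      simp only [Nat.add_sub_cancel]
      have hLb : ∀ l ∈ Finset.range (m+1+1), a ((m+1+1)*(i+1)+l+1) = b (l+1) := by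
        intro l _; simp only [hb]; congr 1 <;> omega
      have hLb' : ∀ l ∈ Finset.range (m+1+1), a ((m+1+1)*i+l+1) = b' l := by
        intro l _; simp only [hb']
      rw [Finset.sum_congr rfl hLb, Finset.sum_congr rfl hLb']
      have hc1 : ∀ l ∈ Finset.range (m+1),
          (c (l+1) - c l) • b (l+1) = -(K • b (l+1)) := by
        intro l _
        rw [← neg_smul]; congr 1
        simp only [hc, hKdef]; push_cast; field_simp; ring
      have hc2 : ∀ l ∈ Finset.range m,
          (c' (l+1) - c' l) • b' (l+1) = K • b' (l+1) := by
        intro l _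
        congr 1
        simp only [hc', hKdef]; push_cast; field_simp; ring
      rw [Finset.sum_congr rfl hc1, Finset.sum_congr rfl hc2]
      have h2 : (0:ℝ) < (m:ℝ)+2 := by positivity
      have e1 : c (m+1) = K := by
        simp only [hc, hKdef]; push_cast; field_simp; norm_num
      have e2 : c 0 = 1 := by
        simp only [hc, Nat.cast_zero, sub_zero]; exact div_self (by positivity)
      have e3 : c' m = 1 - K := by
        simp only [hc', hKdef]; field_simp; ring
      have e4 : c' 0 = K := by
        simp only [hc', hKdef]; norm_num
      have e5 : ((m+1+1:ℕ):ℝ)⁻¹ = K := by rw [hK]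
      rw [e1, e2, e3, e4, e5]
      have hb0 : b 0 = b' (m+1) := by
        simp only [hb, hb']; congr 1 <;> ring
      rw [Finset.sum_neg_distrib, ← Finset.smul_sum, ← Finset.smul_sum,
        Finset.sum_range_succ (fun l => b (l+1)) (m+1),
        Finset.sum_range_succ' (fun l => b' l) (m+1),
        Finset.sum_range_succ (fun l => b' (l+1)) m, hb0]
      module
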